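/- arXiv:2304.12098 — 3 statements merged into one kernel-verified Lean document; each statement's English description precedes it below -/
import Mathlib

section
/- For all positive real numbers a, b, c, d, the function f(t) = -(a·d)·log(t) - (c·b)·log(1-t) on the open interval (0,1) attains a strict unique minimum at t* = σ(log(a/c) - log(b/d)), where σ(t) = 1/(1 + exp(-t)) is the logistic sigmoid; that is, for every t in (0,1) with t ≠ t*, we have f(t*) < f(t). -/
noncomputable def sigmoid (t : ℝ) : ℝ := 1 / (1 + Real.exp (-t))

theorem scomgan_optimal_discriminator_pointwise
    (a b c d : ℝ) (ha : 0 < a) (hb : 0 < b) (hc : 0 < c) (hd : 0 < d) :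
    ∀ t ∈ Set.Ioo (0 : ℝ) 1,
      t ≠ sigmoid (Real.log (a / c) - Real.log (b / d)) →
      (-(a * d) * Real.log (sigmoid (Real.log (a / c) - Real.log (b / d)))
        - (c * b) * Real.log (1 - sigmoid (Real.log (a / c) - Real.log (b / d))))
        < (-(a * d) * Real.log t - (c * b) * Real.log (1 - t)) := by
  intro t ht hne
  obtain ⟨ht0, ht1⟩ := ht
  set A := a * d with hA
  set B := c * b with hB
  have hApos : 0 < A := mul_pos ha hd
  have hBpos : 0 < B := mul_pos hc hb
  have hABpos : 0 < A + B := by linarith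
  have hexp : Real.exp (-(Real.log (a/c) - Real.log (b/d))) = (b/d)/(a/c) := by
    rw [neg_sub, ← Real.log_div (by positivity) (by positivity),
      Real.exp_log (by positivity)]
  have hs : sigmoid (Real.log (a / c) - Real.log (b / d)) = A / (A + B) := by
    unfold sigmoid
    rw [hexp, hA, hB]
    field_simp
  rw [hs] at hne ⊢
  set s := A / (A + B) with hsdef
  have hs0 : 0 < s := by positivity
  have hs1 : s < 1 := by
    rw [hsdef, div_lt_one hABpos]; linarith
  have h1s : 1 - s = B / (A + B) := by
    rw [hsdef]; field_simp; ring
  -- log x < x - 1 for x ≠ 1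
  have hts : t / s ≠ 1 := by
    intro h
    apply hne
    field_simp at h
    linarith
  have h1ts : (1 - t) / (1 - s) ≠ 1 := by
    intro h
    apply hne
    rw [div_eq_one_iff_eq (by linarith)] at h
    linarith
  have hl1 : Real.log (t / s) < t / s - 1 :=
    Real.log_lt_sub_one_of_pos (by positivity) hts
  have hl2 : Real.log ((1 - t) / (1 - s)) < (1 - t) / (1 - s) - 1 :=
    Real.log_lt_sub_one_of_pos (div_pos (by linarith) (by linarith)) h1ts
  rw [Real.log_div (ne_of_gt ht0) (ne_of_gt hs0)] at hl1
  rw [Real.log_div (by linarith) (by linarith)] at hl2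
  have hrhs : A * (t / s - 1) + B * ((1 - t) / (1 - s) - 1) = 0 := by
    rw [h1s, hsdef]
    field_simp
    ring
  have key : A * (Real.log t - Real.log s) + B * (Real.log (1 - t) - Real.log (1 - s)) < 0 := by
    calc A * (Real.log t - Real.log s) + B * (Real.log (1 - t) - Real.log (1 - s))
        < A * (t / s - 1) + B * ((1 - t) / (1 - s) - 1) := by
          apply add_lt_add
          · exact mul_lt_mul_of_pos_left hl1 hApos
          · exact mul_lt_mul_of_pos_left hl2 hBpos
      _ = 0 := hrhs
  nlinarith [key]
end

section
/- For all positive real numbers a, b, c, d, set A = a·d + (1/2)·a·b + (1/2)·c·d and B = c·b + (1/2)·a·b + (1/2)·c·d. Then the function f(t) = -A·log(t) - B·log(1-t) on the open interval (0,1) attains a strict unique minimum at t* = 1/2 + (1/2)·( a/(a+c) - b/(b+d) ); that is, for every t in (0,1) with t ≠ t*, f(t*) < f(t). -/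
lemma key_gibbs (A B t : ℝ) (hA : 0 < A) (hB : 0 < B)
    (ht0 : 0 < t) (ht1 : t < 1) (hne : t ≠ A / (A + B)) :
    -A * Real.log (A / (A + B)) - B * Real.log (1 - A / (A + B))
      < -A * Real.log t - B * Real.log (1 - t) := by
  have hAB : 0 < A + B := by linarith
  set s : ℝ := A / (A + B) with hs
  have hs0 : 0 < s := div_pos hA hAB
  have hs1 : s < 1 := (div_lt_one hAB).2 (by linarith)
  have h1s : 1 - s = B / (A + B) := by
    rw [hs, eq_div_iff hAB.ne', sub_mul, div_mul_cancel₀ _ hAB.ne']; ring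
  -- show A*log t + B*log(1-t) < A*log s + B*log(1-s)
  have hlt : A * Real.log (t / s) + B * Real.log ((1 - t) / (1 - s)) < 0 := by
    have e1 : A * (t / s) = (A + B) * t := by rw [hs]; field_simp
    have e2 : B * ((1 - t) / (1 - s)) = (A + B) * (1 - t) := by
      rw [h1s]; field_simp
    have h2 : Real.log ((1 - t) / (1 - s)) ≤ (1 - t) / (1 - s) - 1 :=
      Real.log_le_sub_one_of_pos (div_pos (by linarith) (by linarith))
    have h1 : Real.log (t / s) < t / s - 1 := by
      apply Real.log_lt_sub_one_of_pos (div_pos ht0 hs0)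
      intro h
      exact hne (by field_simp at h; linarith)
    nlinarith [mul_lt_mul_of_pos_left h1 hA, mul_le_mul_of_nonneg_left h2 hB.le]
  have l1 : Real.log (t / s) = Real.log t - Real.log s := Real.log_div ht0.ne' hs0.ne'
  have l2 : Real.log ((1 - t) / (1 - s)) = Real.log (1 - t) - Real.log (1 - s) :=
    Real.log_div (by linarith) (by linarith)
  rw [l1, l2] at hlt
  linarith

theorem scomgan_eq_optimal_discriminator_pointwise
    (a b c d : ℝ) (ha : 0 < a) (hb : 0 < b) (hc : 0 < c) (hd : 0 < d) :
    ∀ t ∈ Set.Ioo (0 : ℝ) 1,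
      t ≠ 1 / 2 + (1 / 2) * (a / (a + c) - b / (b + d)) →
      (-(a * d + (1 / 2) * (a * b) + (1 / 2) * (c * d))
          * Real.log (1 / 2 + (1 / 2) * (a / (a + c) - b / (b + d)))
        - (c * b + (1 / 2) * (a * b) + (1 / 2) * (c * d))
          * Real.log (1 - (1 / 2 + (1 / 2) * (a / (a + c) - b / (b + d)))))
      < (-(a * d + (1 / 2) * (a * b) + (1 / 2) * (c * d)) * Real.log t
          - (c * b + (1 / 2) * (a * b) + (1 / 2) * (c * d)) * Real.log (1 - t)) := by
  intro t ht hne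
  set A : ℝ := a * d + (1 / 2) * (a * b) + (1 / 2) * (c * d) with hA
  set B : ℝ := c * b + (1 / 2) * (a * b) + (1 / 2) * (c * d) with hB
  have hApos : 0 < A := by positivity
  have hBpos : 0 < B := by positivity
  have hstar : 1 / 2 + (1 / 2) * (a / (a + c) - b / (b + d)) = A / (A + B) := by
    rw [hA, hB]
    have h1 : a + c ≠ 0 := by positivity
    have h2 : b + d ≠ 0 := by positivity
    have h3 : (a*d + 1/2*(a*b) + 1/2*(c*d)) + (c*b + 1/2*(a*b) + 1/2*(c*d)) ≠ 0 := by
      positivity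
    field_simp
    ring
  rw [hstar] at hne ⊢
  exact key_gibbs A B t hApos hBpos ht.1 ht.2 hne
end

section
/- For all positive real numbers a, b, c, d, the function f(t) = (a·d)·(t-1)² + (c·b)·(t+1)² + (a·b)·t² + (c·d)·t² on ℝ attains a strict unique minimum at t* = (1/2)·( (a-c)/(a+c) - (b-d)/(b+d) ); that is, for every t ≠ t*, f(t*) < f(t). -/
theorem lscomgan_eq_optimal_discriminator_pointwise
    (a b c d : ℝ) (ha : 0 < a) (hb : 0 < b) (hc : 0 < c) (hd : 0 < d) :
    ∀ t : ℝ, t ≠ (1 / 2) * ((a - c) / (a + c) - (b - d) / (b + d)) →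
      ((a * d) * ((1 / 2) * ((a - c) / (a + c) - (b - d) / (b + d)) - 1) ^ 2
        + (c * b) * ((1 / 2) * ((a - c) / (a + c) - (b - d) / (b + d)) + 1) ^ 2
        + (a * b) * ((1 / 2) * ((a - c) / (a + c) - (b - d) / (b + d))) ^ 2
        + (c * d) * ((1 / 2) * ((a - c) / (a + c) - (b - d) / (b + d))) ^ 2)
      < ((a * d) * (t - 1) ^ 2 + (c * b) * (t + 1) ^ 2 + (a * b) * t ^ 2 + (c * d) * t ^ 2) := by
  intro t ht
  have hac : 0 < a + c := by linarith
  have hbd : 0 < b + d := by linarith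
  have hS : 0 < (a + c) * (b + d) := mul_pos hac hbd
  have hm : (1 / 2) * ((a - c) / (a + c) - (b - d) / (b + d))
      = (a * d - c * b) / ((a + c) * (b + d)) := by
    field_simp
    ring
  rw [hm] at ht ⊢
  have hmul : (a * d - c * b) / ((a + c) * (b + d)) * ((a + c) * (b + d))
      = a * d - c * b := div_mul_cancel₀ _ hS.ne'
  have hne : t - (a * d - c * b) / ((a + c) * (b + d)) ≠ 0 := sub_ne_zero.mpr ht
  nlinarith [mul_pos hS (pow_pos (abs_pos.mpr hne) 2), sq_abs (t - (a * d - c * b) / ((a + c) * (b + d))), mul_pos hS hS]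
end
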